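/- Let F, G be a maximal solution of the planar ODE system F' = −F² − G, G' = F(1 − 2G) with initial data satisfying G(0) < 1/2. Then the solution is defined for all t ≥ 0 and the functions F and G are bounded on [0, ∞). -/

import Mathlib

open Set Real
open scoped Manifold

noncomputable section PlaneRadialAux

/-- The phase plane. -/
abbrev PR.EE := ℝ × ℝ

namespace PR

abbrev II := 𝓘(ℝ, EE)

/-- `u = 1 - 2G`. -/
def uu (p : EE) : ℝ := 1 - 2 * p.2

/-- The conserved quantity (relative to the constant `c`). -/
def Wf (c : ℝ) (p : EE) : ℝ := 2 * p.1 ^ 2 + uu p * Real.log (uu p) + 1 - c * uu p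

/-- The vector field of the system. -/
def vf : EE → EE := fun p => (-p.1 ^ 2 - p.2, p.1 * (1 - 2 * p.2))

lemma contDiff_vf : ContDiff ℝ 1 vf := by
  unfold vf; fun_prop

def bump {r₀ : ℝ} (hr₀ : 0 < r₀) : ContDiffBump (0 : ℝ) :=
  { rIn := r₀, rOut := 2 * r₀, rIn_pos := hr₀, rIn_lt_rOut := by linarith }

def chi {r₀ : ℝ} (hr₀ : 0 < r₀) : EE → ℝ := fun p => bump hr₀ p.1 * bump hr₀ p.2

/-- The truncated vector field. -/
def vmod {r₀ : ℝ} (hr₀ : 0 < r₀) : EE → EE := fun p => chi hr₀ p • vf p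

lemma contDiff_vmod {r₀ : ℝ} (hr₀ : 0 < r₀) : ContDiff ℝ 1 (vmod hr₀) := by
  apply ContDiff.fun_smul _ contDiff_vf
  exact (((bump hr₀).contDiff).comp contDiff_fst).mul
    (((bump hr₀).contDiff).comp contDiff_snd)

lemma continuous_chi {r₀ : ℝ} (hr₀ : 0 < r₀) : Continuous (chi hr₀) :=
  (((bump hr₀).continuous).comp continuous_fst).mul
    (((bump hr₀).continuous).comp continuous_snd)

lemma chi_one {r₀ : ℝ} (hr₀ : 0 < r₀) {p : EE} (h1 : |p.1| ≤ r₀) (h2 : |p.2| ≤ r₀) :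
    chi hr₀ p = 1 := by
  have e1 : bump hr₀ p.1 = 1 := (bump hr₀).one_of_mem_closedBall (by
    simpa [Metric.mem_closedBall, Real.dist_eq, bump] using h1)
  have e2 : bump hr₀ p.2 = 1 := (bump hr₀).one_of_mem_closedBall (by
    simpa [Metric.mem_closedBall, Real.dist_eq, bump] using h2)
  simp [chi, e1, e2]

lemma hcs_vmod {r₀ : ℝ} (hr₀ : 0 < r₀) : HasCompactSupport (vmod hr₀) := by
  apply HasCompactSupport.intro
    ((isCompact_Icc (a := -(2*r₀)) (b := 2*r₀)).prod (isCompact_Icc (a := -(2*r₀)) (b := 2*r₀)))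
  intro p hp
  have h0 : bump hr₀ p.1 = 0 ∨ bump hr₀ p.2 = 0 := by
    rw [Set.mem_prod, not_and_or] at hp
    rcases hp with h | h
    · left
      apply (bump hr₀).zero_of_le_dist
      rw [Real.dist_eq, sub_zero]
      have : ¬ |p.1| ≤ 2*r₀ := by rw [abs_le]; simpa [Set.mem_Icc] using h
      show 2 * r₀ ≤ |p.1|
      linarith [not_le.mp this]
    · right
      apply (bump hr₀).zero_of_le_dist
      rw [Real.dist_eq, sub_zero]
      have : ¬ |p.2| ≤ 2*r₀ := by rw [abs_le]; simpa [Set.mem_Icc] using h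
      show 2 * r₀ ≤ |p.2|
      linarith [not_le.mp this]
  unfold vmod chi
  rcases h0 with h | h <;> simp [h]

lemma contMDiff_section_of_contDiff {w : EE → EE} (hw : ContDiff ℝ 1 w) :
    ContMDiff II II.tangent 1
      (fun x ↦ (⟨x, w x⟩ : TangentBundle II EE)) := by
  intro x₀
  apply (Bundle.contMDiffAt_section x₀).2
  have h : (fun x => (trivializationAt EE (TangentSpace II)
      x₀ ⟨x, w x⟩).2) = w := by
    funext x
    rw [TangentBundle.trivializationAt_apply]
    simp only [mfld_simps]
    show (fderivWithin ℝ (id ∘ id) univ x) (w x) = w x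
    rw [Function.comp_id, fderivWithin_id uniqueDiffWithinAt_univ]
    rfl
  rw [h, contMDiffAt_iff_contDiffAt]
  exact hw.contDiffAt

lemma local_curve {w : EE → EE} {Lw : NNReal} {Cb : ℝ}
    (hlip : LipschitzWith Lw w) (hbdd : ∀ x, ‖w x‖ ≤ Cb) (x₀ : EE) :
    ∃ γ : ℝ → EE, γ 0 = x₀ ∧ IsMIntegralCurveOn (I := II) γ w (Ioo (-1) 1) := by
  have hCb : 0 ≤ Cb := le_trans (norm_nonneg _) (hbdd x₀)
  have hpl : IsPicardLindelof (fun _ : ℝ => w) (tmin := -1) (tmax := 1)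
      ⟨0, by norm_num, by norm_num⟩ x₀ Cb.toNNReal 0 Cb.toNNReal Lw :=
    { lipschitzOnWith := fun t _ => hlip.lipschitzOnWith
      continuousOn := fun x _ => continuousOn_const
      norm_le := fun t _ x _ => (hbdd x).trans (Real.le_coe_toNNReal Cb)
      mul_max_le := by norm_num }
  obtain ⟨f, hf0, hf⟩ := IsPicardLindelof.exists_eq_forall_mem_Icc_hasDerivWithinAt₀ hpl
  refine ⟨f, hf0, fun t ht => ?_⟩
  apply HasMFDerivAt.hasMFDerivWithinAt
  apply hasMFDerivAt_iff_hasFDerivAt.2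
  have hfd := hasDerivAt_iff_hasFDerivAt.mp
    ((hf t (Ioo_subset_Icc_self ht)).hasDerivAt (Icc_mem_nhds ht.1 ht.2))
  exact hfd

lemma u_lower {c : ℝ} {p : EE} (hu : 0 < uu p) (hW : Wf c p = 0) :
    min (1/16) (1/(4*(|c|+1))) < uu p := by
  by_contra hle
  push_neg at hle
  set u := uu p with hu_def
  have h16 : u ≤ 1/16 := le_trans hle (min_le_left _ _)
  have hc4 : u ≤ 1/(4*(|c|+1)) := le_trans hle (min_le_right _ _)
  have hsq : Real.sqrt u * Real.sqrt u = u := Real.mul_self_sqrt hu.le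
  have hsqpos : 0 < Real.sqrt u := Real.sqrt_pos.mpr hu
  have hlog2 : Real.log u = 2 * Real.log (Real.sqrt u) := by
    rw [Real.log_sqrt hu.le]; ring
  have hup : Real.log (1 / Real.sqrt u) ≤ 1 / Real.sqrt u - 1 :=
    Real.log_le_sub_one_of_pos (by positivity)
  have hlogl : 2*u - 2*Real.sqrt u ≤ u * Real.log u := by
    rw [hlog2]
    have : Real.log (1 / Real.sqrt u) = - Real.log (Real.sqrt u) := by
      rw [Real.log_div one_ne_zero (ne_of_gt hsqpos), Real.log_one]; ring
    rw [this] at hup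
    have h3 : u * (1/Real.sqrt u) = Real.sqrt u := by
      rw [mul_one_div]
      rw [div_eq_iff (ne_of_gt hsqpos), hsq]
    have h2 : u * (-Real.log (Real.sqrt u)) ≤ u * (1/Real.sqrt u - 1) :=
      mul_le_mul_of_nonneg_left hup hu.le
    rw [mul_sub, h3] at h2
    nlinarith
  have hsqle : Real.sqrt u ≤ 1/4 := by
    have : Real.sqrt u ≤ Real.sqrt (1/16) := Real.sqrt_le_sqrt h16
    rwa [show (1/16 : ℝ) = (1/4)^2 by norm_num, Real.sqrt_sq (by norm_num)] at this
  have hcu : c * u ≤ |c| * u := mul_le_mul_of_nonneg_right (le_abs_self c) hu.le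
  have hcu2 : |c| * u ≤ 1/4 := by
    have h1 : |c| * u ≤ |c| * (1/(4*(|c|+1))) :=
      mul_le_mul_of_nonneg_left hc4 (abs_nonneg c)
    have h2 : |c| * (1/(4*(|c|+1))) ≤ 1/4 := by
      rw [mul_one_div, div_le_div_iff₀ (by positivity) (by norm_num)]
      nlinarith [abs_nonneg c]
    linarith
  have hWe : 2 * p.1 ^ 2 + u * Real.log u + 1 - c * u = 0 := hW
  nlinarith [sq_nonneg p.1]

lemma u_upper {c : ℝ} {p : EE} (hu : 0 < uu p) (hW : Wf c p = 0) : uu p ≤ Real.exp c := by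
  by_contra hlt
  push_neg at hlt
  have hclog : c < Real.log (uu p) := (Real.lt_log_iff_exp_lt hu).mpr hlt
  have : c * uu p < Real.log (uu p) * uu p := by
    apply mul_lt_mul_of_pos_right hclog hu
  have hWe : 2 * p.1 ^ 2 + uu p * Real.log (uu p) + 1 - c * uu p = 0 := hW
  nlinarith [sq_nonneg p.1]

lemma FG_bounds {c δ : ℝ} (hδ : 0 < δ) {p : EE} (hul : δ ≤ uu p) (hW : Wf c p = 0) :
    |p.1| ≤ (|c| * Real.exp c + Real.exp c * (|Real.log δ| + |c|)) / 2 + 1 ∧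
      |p.2| ≤ (1 + Real.exp c) / 2 := by
  have hu : 0 < uu p := lt_of_lt_of_le hδ hul
  have hU : uu p ≤ Real.exp c := u_upper hu hW
  set U := Real.exp c with hUdef
  have hUpos : 0 < U := Real.exp_pos c
  have hue : uu p = 1 - 2 * p.2 := rfl
  have hlogle : Real.log (uu p) ≤ c := by
    calc Real.log (uu p) ≤ Real.log U := Real.log_le_log hu hU
    _ = c := Real.log_exp c
  have hlogge : Real.log δ ≤ Real.log (uu p) := Real.log_le_log hδ hul
  have habs : |Real.log (uu p)| ≤ |Real.log δ| + |c| := by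
    rw [abs_le]
    constructor
    · have := neg_abs_le (Real.log δ)
      have := abs_nonneg c
      linarith
    · have := le_abs_self c
      have := abs_nonneg (Real.log δ)
      linarith
  have hWe : 2 * p.1 ^ 2 + uu p * Real.log (uu p) + 1 - c * uu p = 0 := hW
  have h1 : c * uu p ≤ |c| * U := by
    calc c * uu p ≤ |c| * uu p := mul_le_mul_of_nonneg_right (le_abs_self c) hu.le
    _ ≤ |c| * U := mul_le_mul_of_nonneg_left hU (abs_nonneg c)
  have h2 : -(uu p * Real.log (uu p)) ≤ U * (|Real.log δ| + |c|) := by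
    have e1 : -(uu p * Real.log (uu p)) ≤ uu p * |Real.log (uu p)| := by
      rw [← mul_neg]
      exact mul_le_mul_of_nonneg_left (neg_le_abs _) hu.le
    have e2 : uu p * |Real.log (uu p)| ≤ U * (|Real.log δ| + |c|) :=
      mul_le_mul hU habs (abs_nonneg _) hUpos.le
    linarith
  constructor
  · have hF2 : p.1 ^ 2 ≤ (|c| * U + U * (|Real.log δ| + |c|)) / 2 := by linarith
    nlinarith [sq_nonneg (|p.1| - 1), sq_abs p.1, abs_nonneg p.1]
  · rw [abs_le]
    constructor <;> nlinarith [hUpos.le]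

lemma hasDerivAt_fst {γ : ℝ → EE} {y : EE} {s : ℝ} (h : HasDerivAt γ y s) :
    HasDerivAt (fun t => (γ t).1) y.1 s :=
  (ContinuousLinearMap.fst ℝ ℝ ℝ).hasFDerivAt.comp_hasDerivAt s h

lemma hasDerivAt_snd {γ : ℝ → EE} {y : EE} {s : ℝ} (h : HasDerivAt γ y s) :
    HasDerivAt (fun t => (γ t).2) y.2 s :=
  (ContinuousLinearMap.snd ℝ ℝ ℝ).hasFDerivAt.comp_hasDerivAt s h

lemma hasDerivAt_W (c : ℝ) {χ : ℝ} {γ : ℝ → EE} {s : ℝ}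
    (hγ : HasDerivAt γ (χ • vf (γ s)) s) (hu : uu (γ s) ≠ 0) :
    HasDerivAt (fun t => Wf c (γ t)) (-2 * χ * (γ s).1 * Wf c (γ s)) s := by
  set P := fun t => (γ t).1 with hP_def
  set Q := fun t => (γ t).2 with hQ_def
  have hP : HasDerivAt P (χ * (-(P s) ^ 2 - Q s)) s := by
    have := hasDerivAt_fst hγ
    simpa [vf] using this
  have hQ : HasDerivAt Q (χ * (P s * (1 - 2 * Q s))) s := by
    have := hasDerivAt_snd hγ
    simpa [vf] using this
  have hU : HasDerivAt (fun t => 1 - 2 * Q t) (-(2 * (χ * (P s * (1 - 2 * Q s))))) s := by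
    simpa using ((hQ.const_mul 2).const_sub 1)
  have hu' : (1 : ℝ) - 2 * Q s ≠ 0 := hu
  have hlog : HasDerivAt (fun t => Real.log (1 - 2 * Q t))
      ((1 - 2 * Q s)⁻¹ * -(2 * (χ * (P s * (1 - 2 * Q s))))) s :=
    by have := (Real.hasDerivAt_log hu').comp s hU; exact this
  have hW := ((((hP.pow 2).const_mul 2).add (hU.mul hlog)).add_const 1).sub
    (hU.const_mul c)
  have heq : (fun t => Wf c (γ t)) = fun t => 2 * (P t) ^ 2
      + (1 - 2 * Q t) * Real.log (1 - 2 * Q t) + 1 - c * (1 - 2 * Q t) := rfl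
  rw [heq]
  refine hW.congr_deriv ?_
  have : Wf c (γ s) = 2 * (P s) ^ 2 + (1 - 2 * Q s) * Real.log (1 - 2 * Q s) + 1
      - c * (1 - 2 * Q s) := rfl
  rw [this]
  field_simp
  ring

lemma gronwall_zero {h c : ℝ → ℝ} {a b K : ℝ}
    (hd : ∀ s ∈ Icc a b, HasDerivAt h (c s * h s) s) (hK : ∀ s ∈ Icc a b, |c s| ≤ K)
    (ha : h a = 0) : ∀ s ∈ Icc a b, h s = 0 := by
  have key := norm_le_gronwallBound_of_norm_deriv_right_le (f := h)
    (f' := fun s => c s * h s) (δ := 0) (K := K) (ε := 0) (a := a) (b := b)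
    (fun s hs => (hd s hs).continuousAt.continuousWithinAt)
    (fun x hx => ((hd x (Ico_subset_Icc_self hx)).hasDerivWithinAt))
    (by simp [ha])
    (fun x hx => by
      rw [Real.norm_eq_abs, Real.norm_eq_abs, abs_mul]
      have := mul_le_mul_of_nonneg_right (hK x (Ico_subset_Icc_self hx)) (abs_nonneg (h x))
      linarith)
  intro s hs
  have := key s hs
  rw [gronwallBound_ε0_δ0] at this
  rw [Real.norm_eq_abs] at this
  exact abs_eq_zero.mp (le_antisymm this (abs_nonneg _))

end PR

end PlaneRadialAux

/-- For the plane (d = 2) radially symmetric system `F' = −F² − G`,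
`G' = F(1 − 2G)` with initial data `G(0) < 1/2`, the (maximal) solution is
defined for all `t ≥ 0` and `F`, `G` are bounded on `[0, ∞)`. Since the
right-hand side is smooth, solutions are unique, so this is expressed as the
existence of a globally defined bounded solution with the given initial data. -/
theorem plane_radial_global_bounded (F₀ G₀ : ℝ) (hG₀ : G₀ < 1 / 2) :
    ∃ F G : ℝ → ℝ, F 0 = F₀ ∧ G 0 = G₀ ∧
      (∀ t : ℝ, 0 ≤ t →
        HasDerivAt F (-(F t) ^ 2 - G t) t ∧
        HasDerivAt G (F t * (1 - 2 * G t)) t) ∧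
      ∃ M : ℝ, ∀ t : ℝ, 0 ≤ t → |F t| ≤ M ∧ |G t| ≤ M := by
  classical
  set p₀ : PR.EE := (F₀, G₀) with hp₀
  have hu₀ : 0 < PR.uu p₀ := by
    show (0:ℝ) < 1 - 2 * G₀
    linarith
  set c : ℝ := (2 * F₀ ^ 2 + PR.uu p₀ * Real.log (PR.uu p₀) + 1) / PR.uu p₀ with hc
  have hW₀ : PR.Wf c p₀ = 0 := by
    have h : PR.uu p₀ ≠ 0 := ne_of_gt hu₀
    show 2 * p₀.1 ^ 2 + PR.uu p₀ * Real.log (PR.uu p₀) + 1 - c * PR.uu p₀ = 0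
    have hp1 : p₀.1 = F₀ := rfl
    rw [hp1, hc]
    field_simp
    ring
  set δ : ℝ := min (PR.uu p₀) (min (1/16) (1/(4*(|c|+1)))) with hδdef
  have hδ : 0 < δ := lt_min hu₀ (lt_min (by norm_num) (by positivity))
  have hL_of : ∀ p : PR.EE, 0 < PR.uu p → PR.Wf c p = 0 → δ ≤ PR.uu p := by
    intro p h1 h2
    have := PR.u_lower h1 h2
    have h3 : δ ≤ min (1/16) (1/(4*(|c|+1))) := min_le_right _ _
    linarith
  -- the bounding box
  set B1 : ℝ := (|c| * Real.exp c + Real.exp c * (|Real.log δ| + |c|)) / 2 + 1 with hB1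
  set B2 : ℝ := (1 + Real.exp c) / 2 with hB2
  set r₀ : ℝ := max B1 B2 + 1 with hr₀def
  have hr₀ : 0 < r₀ := by
    have h1 : B2 ≤ max B1 B2 := le_max_right _ _
    have h2 : (0:ℝ) < B2 := by
      rw [hB2]
      have := Real.exp_pos c
      linarith
    rw [hr₀def]; linarith
  have hbox : ∀ p : PR.EE, δ ≤ PR.uu p → PR.Wf c p = 0 → |p.1| ≤ r₀ ∧ |p.2| ≤ r₀ := by
    intro p h1 h2
    obtain ⟨ha, hb⟩ := PR.FG_bounds hδ h1 h2
    constructor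
    · have : B1 ≤ r₀ := by rw [hr₀def]; have := le_max_left B1 B2; linarith
      exact le_trans ha this
    · have : B2 ≤ r₀ := by rw [hr₀def]; have := le_max_right B1 B2; linarith
      exact le_trans hb this
  -- the global curve of the truncated field
  obtain ⟨Lw, hlip⟩ := ContDiff.lipschitzWith_of_hasCompactSupport (PR.hcs_vmod hr₀)
    (PR.contDiff_vmod hr₀) one_ne_zero
  obtain ⟨Cb, hCb⟩ := (PR.hcs_vmod hr₀).exists_bound_of_continuous
    (PR.contDiff_vmod hr₀).continuous
  obtain ⟨γ, hγ0, hγ⟩ := exists_isMIntegralCurve_of_isMIntegralCurveOn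
    (PR.contMDiff_section_of_contDiff (PR.contDiff_vmod hr₀)) one_pos
    (fun x => PR.local_curve hlip hCb x) p₀
  have hd : ∀ t, HasDerivAt γ (PR.vmod hr₀ (γ t)) t := by
    intro t
    have := hasMFDerivAt_iff_hasFDerivAt.1 (hγ t)
    exact hasDerivAt_iff_hasFDerivAt.mpr this
  have hγc : Continuous γ := continuous_iff_continuousAt.mpr (fun t => (hd t).continuousAt)
  have hucont : Continuous (fun t => PR.uu (γ t)) := by
    show Continuous (fun t => 1 - 2 * (γ t).2)
    exact continuous_const.sub (continuous_const.mul (continuous_snd.comp hγc))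
  -- extension step
  have step : ∀ T : ℝ, δ ≤ PR.uu (γ T) → PR.Wf c (γ T) = 0 →
      ∃ η > 0, ∀ s ∈ Icc T (T+η), δ ≤ PR.uu (γ s) ∧ PR.Wf c (γ s) = 0 := by
    intro T h1 h2
    have hmem : (fun t => PR.uu (γ t)) ⁻¹' (Ioi (δ/2)) ∈ nhds T :=
      hucont.continuousAt.preimage_mem_nhds (Ioi_mem_nhds (by linarith))
    obtain ⟨ε, hε, hball⟩ := Metric.mem_nhds_iff.mp hmem
    set η : ℝ := ε/2 with hη_def
    have hηpos : 0 < η := by positivity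
    have hupos : ∀ s ∈ Icc T (T+η), δ/2 < PR.uu (γ s) := by
      intro s hs
      apply hball
      rw [Metric.mem_ball, Real.dist_eq, abs_lt]
      obtain ⟨hs1, hs2⟩ := hs
      constructor <;> [linarith; linarith]
    have hder : ∀ s ∈ Icc T (T+η), HasDerivAt (fun t => PR.Wf c (γ t))
        ((-2 * PR.chi hr₀ (γ s) * (γ s).1) * PR.Wf c (γ s)) s := by
      intro s hs
      have hune : PR.uu (γ s) ≠ 0 := ne_of_gt (lt_trans (by linarith) (hupos s hs))
      have hds : HasDerivAt γ (PR.chi hr₀ (γ s) • PR.vf (γ s)) s := hd s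
      exact PR.hasDerivAt_W c hds hune
    have hccont : ContinuousOn (fun s => -2 * PR.chi hr₀ (γ s) * (γ s).1) (Icc T (T+η)) := by
      apply Continuous.continuousOn
      exact (continuous_const.mul ((PR.continuous_chi hr₀).comp hγc)).mul
        (continuous_fst.comp hγc)
    obtain ⟨K, hKb⟩ := (isCompact_Icc (a := T) (b := T+η)).exists_bound_of_continuousOn hccont
    have hz := PR.gronwall_zero hder
      (fun s hs => by rw [← Real.norm_eq_abs]; exact hKb s hs) h2
    refine ⟨η, hηpos, fun s hs => ?_⟩
    have hW0 := hz s hs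
    have hupos' : 0 < PR.uu (γ s) := lt_trans (by linarith) (hupos s hs)
    exact ⟨hL_of (γ s) hupos' hW0, hW0⟩
  -- invariance for t ≥ 0
  have hstart : δ ≤ PR.uu (γ 0) ∧ PR.Wf c (γ 0) = 0 := by
    rw [hγ0]; exact ⟨min_le_left _ _, hW₀⟩
  have hinv : ∀ t : ℝ, 0 ≤ t → δ ≤ PR.uu (γ t) ∧ PR.Wf c (γ t) = 0 := by
    by_contra hcon
    push_neg at hcon
    obtain ⟨t₁, ht₁0, ht₁⟩ := hcon
    have ht₁' : ¬ (δ ≤ PR.uu (γ t₁) ∧ PR.Wf c (γ t₁) = 0) := by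
      intro hh
      exact ht₁ hh.1 hh.2
    set bad := {t : ℝ | 0 ≤ t ∧ ¬ (δ ≤ PR.uu (γ t) ∧ PR.Wf c (γ t) = 0)} with hbad_def
    have hbadne : bad.Nonempty := ⟨t₁, ht₁0, ht₁'⟩
    have hbdd : BddBelow bad := ⟨0, fun x hx => hx.1⟩
    set T := sInf bad with hT
    have hT0 : 0 ≤ T := le_csInf hbadne (fun b hb => hb.1)
    have hbefore : ∀ s, 0 ≤ s → s < T → δ ≤ PR.uu (γ s) ∧ PR.Wf c (γ s) = 0 := by
      intro s hs0 hsT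
      by_contra hns
      exact absurd (csInf_le hbdd ⟨hs0, hns⟩) (not_le.mpr hsT)
    have hTL : δ ≤ PR.uu (γ T) ∧ PR.Wf c (γ T) = 0 := by
      rcases eq_or_lt_of_le hT0 with h | h
      · rw [← h]; exact hstart
      · have hIoo : Ioo 0 T ∈ nhdsWithin T (Iio T) := Ioo_mem_nhdsLT h
        have htend_u : Filter.Tendsto (fun s => PR.uu (γ s)) (nhdsWithin T (Iio T))
            (nhds (PR.uu (γ T))) :=
          (hucont.tendsto T).mono_left nhdsWithin_le_nhds
        have hu_T : δ ≤ PR.uu (γ T) := ge_of_tendsto htend_u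
          (Filter.eventually_of_mem hIoo (fun s hs => (hbefore s hs.1.le hs.2).1))
        have hupos : (0:ℝ) < PR.uu (γ T) := lt_of_lt_of_le hδ hu_T
        have hWcont : ContinuousAt (fun t => PR.Wf c (γ t)) T := by
          have h1 : ContinuousAt (fun t => PR.uu (γ t)) T := hucont.continuousAt
          have hlog : ContinuousAt (fun t => Real.log (PR.uu (γ t))) T :=
            h1.log (ne_of_gt hupos)
          have hP : ContinuousAt (fun t => (γ t).1) T := (continuous_fst.comp hγc).continuousAt
          show ContinuousAt (fun t => 2 * (γ t).1 ^ 2 + PR.uu (γ t) * Real.log (PR.uu (γ t))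
            + 1 - c * PR.uu (γ t)) T
          exact (((((hP.pow 2).const_mul 2).add (h1.mul hlog)).add continuousAt_const).sub
            (h1.const_mul c))
        have hW_T : PR.Wf c (γ T) = 0 := by
          have h2 : Filter.Tendsto (fun s => PR.Wf c (γ s)) (nhdsWithin T (Iio T))
              (nhds (PR.Wf c (γ T))) :=
            (hWcont.tendsto).mono_left nhdsWithin_le_nhds
          have h3 : Filter.Tendsto (fun s => PR.Wf c (γ s)) (nhdsWithin T (Iio T)) (nhds 0) := by
            apply Filter.Tendsto.congr' _ tendsto_const_nhds
            exact (Filter.eventuallyEq_of_mem hIoo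
              (fun s hs => ((hbefore s hs.1.le hs.2).2))).symm
          exact tendsto_nhds_unique h2 h3
        exact ⟨hu_T, hW_T⟩
    obtain ⟨η, hη, hstep⟩ := step T hTL.1 hTL.2
    have hfinal : T + η ≤ T := by
      rw [hT]
      apply le_csInf hbadne
      intro b hb
      by_contra hlt
      push_neg at hlt
      rcases lt_or_ge b T with h' | h'
      · exact hb.2 (hbefore b hb.1 h')
      · exact hb.2 (hstep b ⟨h', hlt.le⟩)
    linarith
  -- conclusion
  refine ⟨fun t => (γ t).1, fun t => (γ t).2, by show (γ 0).1 = F₀; rw [hγ0],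
    by show (γ 0).2 = G₀; rw [hγ0], ?_, ⟨r₀, ?_⟩⟩
  · intro t ht
    obtain ⟨h1, h2⟩ := hinv t ht
    obtain ⟨hb1, hb2⟩ := hbox (γ t) h1 h2
    have hchi : PR.chi hr₀ (γ t) = 1 := PR.chi_one hr₀ hb1 hb2
    have hvt : PR.vmod hr₀ (γ t) = PR.vf (γ t) := by
      show PR.chi hr₀ (γ t) • PR.vf (γ t) = PR.vf (γ t)
      rw [hchi, one_smul]
    have hdt := hd t
    rw [hvt] at hdt
    constructor
    · have := PR.hasDerivAt_fst hdt
      simpa [PR.vf] using this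
    · have := PR.hasDerivAt_snd hdt
      simpa [PR.vf] using this
  · intro t ht
    obtain ⟨h1, h2⟩ := hinv t ht
    exact hbox (γ t) h1 h2
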